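/- arXiv:1306.6438 — 4 statements merged into one kernel-verified Lean document; each statement's English description precedes it below -/
import Mathlib

section
/- For all integers K ≥ 2 and p = 1/K, the quantity q0 = (1-p)^K satisfies ((K-2)/(K-1))·e^{-1} ≤ q0 ≤ e^{-1}. -/
theorem stmt0 (K : ℕ) (hK : 2 ≤ K) :
    ((K - 2 : ℝ) / (K - 1)) * Real.exp (-1) ≤ (1 - 1 / (K : ℝ)) ^ K ∧
      (1 - 1 / (K : ℝ)) ^ K ≤ Real.exp (-1) := by
  have hk : (2 : ℝ) ≤ (K : ℝ) := by exact_mod_cast hK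
  have hk0 : (0 : ℝ) < (K : ℝ) := by linarith
  have hk1 : (0 : ℝ) < (K : ℝ) - 1 := by linarith
  have ha0 : (0 : ℝ) ≤ 1 - 1 / (K : ℝ) := by
    rw [sub_nonneg, div_le_one hk0]; linarith
  constructor
  · -- lower bound
    have hcast : ((K - 1 : ℕ) : ℝ) = (K : ℝ) - 1 := by
      have : 1 ≤ K := by omega
      push_cast [this]; ring
    -- exp(-1) ≤ (1 - 1/K)^(K-1)
    have h1 : (1 : ℝ) + 1 / ((K : ℝ) - 1) ≤ Real.exp (1 / ((K : ℝ) - 1)) := by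
      linarith [Real.add_one_le_exp (1 / ((K : ℝ) - 1))]
    have h2 : ((K : ℝ) / ((K : ℝ) - 1)) ^ (K - 1) ≤ Real.exp 1 := by
      have heq : (K : ℝ) / ((K : ℝ) - 1) = 1 + 1 / ((K : ℝ) - 1) := by
        field_simp; ring
      rw [heq]
      calc (1 + 1 / ((K : ℝ) - 1)) ^ (K - 1)
          ≤ Real.exp (1 / ((K : ℝ) - 1)) ^ (K - 1) := by
            apply pow_le_pow_left₀ (by positivity) h1
        _ = Real.exp (((K - 1 : ℕ) : ℝ) * (1 / ((K : ℝ) - 1))) := by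
            rw [Real.exp_nat_mul]
        _ = Real.exp 1 := by rw [hcast]; congr 1; field_simp
    have h3 : Real.exp (-1) ≤ (1 - 1 / (K : ℝ)) ^ (K - 1) := by
      have heq : (1 - 1 / (K : ℝ)) = ((K : ℝ) / ((K : ℝ) - 1))⁻¹ := by
        field_simp
      rw [heq, Real.exp_neg, inv_pow]
      exact inv_anti₀ (by positivity) h2
    have hsplit : (1 - 1 / (K : ℝ)) ^ K = (1 - 1 / (K : ℝ)) ^ (K - 1) * (1 - 1 / (K : ℝ)) := by
      rw [← pow_succ]
      congr 1
      omega
    rw [hsplit]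
    have hfrac : ((K : ℝ) - 2) / ((K : ℝ) - 1) ≤ 1 - 1 / (K : ℝ) := by
      rw [div_le_iff₀ hk1]
      have : 1 - 1 / (K : ℝ) = ((K : ℝ) - 1) / (K : ℝ) := by field_simp
      rw [this, div_mul_eq_mul_div, le_div_iff₀ hk0]
      nlinarith
    calc ((K : ℝ) - 2) / ((K : ℝ) - 1) * Real.exp (-1)
        ≤ (1 - 1 / (K : ℝ)) * Real.exp (-1) := by
          apply mul_le_mul_of_nonneg_right hfrac (Real.exp_pos _).le
      _ ≤ (1 - 1 / (K : ℝ)) ^ (K - 1) * (1 - 1 / (K : ℝ)) := by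
          rw [mul_comm]
          exact mul_le_mul_of_nonneg_right h3 ha0
  · -- upper bound
    have h1 : 1 - 1 / (K : ℝ) ≤ Real.exp (-(1 / (K : ℝ))) := by
      have := Real.add_one_le_exp (-(1 / (K : ℝ)))
      linarith
    calc (1 - 1 / (K : ℝ)) ^ K ≤ Real.exp (-(1 / (K : ℝ))) ^ K :=
          pow_le_pow_left₀ ha0 h1 K
      _ = Real.exp ((K : ℝ) * -(1 / (K : ℝ))) := (Real.exp_nat_mul _ _).symm
      _ = Real.exp (-1) := by congr 1; field_simp
end

section
/- For fixed T, the function q ↦ φ_K(q,T) = Σ_{ℓ=0}^{K} (-1)^ℓ C(K,ℓ)(1-ℓq)^T is nondecreasing in q on [0, 1/K]. More precisely, its derivative satisfies ∂φ_K/∂q = T·K·(1-q)^{T-1}·φ_{K-1}(q/(1-q), T-1) ≥ 0. -/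
noncomputable def phi (K T : ℕ) (q : ℝ) : ℝ :=
  ∑ ℓ ∈ Finset.range (K + 1), (-1 : ℝ) ^ ℓ * (Nat.choose K ℓ) * (1 - ℓ * q) ^ T

open Finset

lemma hasDerivAt_phi (K T : ℕ) (x : ℝ) :
    HasDerivAt (fun y => phi K T y)
      (∑ ℓ ∈ Finset.range (K + 1),
        (-1 : ℝ) ^ ℓ * (Nat.choose K ℓ) * ((T : ℝ) * (1 - ℓ * x) ^ (T - 1) * (-(ℓ : ℝ)))) x := by
  unfold phi
  apply HasDerivAt.fun_sum
  intro ℓ _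
  have h1 : HasDerivAt (fun y : ℝ => 1 - (ℓ : ℝ) * y) (-(ℓ : ℝ)) x := by
    simpa using ((hasDerivAt_id x).const_mul (ℓ : ℝ)).const_sub (1 : ℝ)
  exact (h1.pow T).const_mul _

lemma phi_deriv_eq (K T : ℕ) (hK : 1 ≤ K) (hT : 1 ≤ T) (x : ℝ) (hx : (1 : ℝ) - x ≠ 0) :
    (∑ ℓ ∈ Finset.range (K + 1),
        (-1 : ℝ) ^ ℓ * (Nat.choose K ℓ) * ((T : ℝ) * (1 - ℓ * x) ^ (T - 1) * (-(ℓ : ℝ))))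
      = T * K * (1 - x) ^ (T - 1) * phi (K - 1) (T - 1) (x / (1 - x)) := by
  obtain ⟨J, rfl⟩ : ∃ J, K = J + 1 := ⟨K - 1, (Nat.succ_pred_eq_of_pos hK).symm⟩
  obtain ⟨S, rfl⟩ : ∃ S, T = S + 1 := ⟨T - 1, (Nat.succ_pred_eq_of_pos hT).symm⟩
  simp only [Nat.add_sub_cancel]
  rw [Finset.sum_range_succ']
  unfold phi
  rw [Finset.mul_sum]
  simp only [Nat.cast_zero, neg_zero, mul_zero, add_zero]
  apply Finset.sum_congr rfl
  intro m hm
  have hchoose : ((J + 1 : ℕ) : ℝ) * (Nat.choose J m : ℝ)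
      = (Nat.choose (J + 1) (m + 1) : ℝ) * ((m + 1 : ℕ) : ℝ) := by
    exact_mod_cast congrArg (Nat.cast : ℕ → ℝ) (Nat.add_one_mul_choose_eq J m)
  have hfac : (1 - ((m + 1 : ℕ) : ℝ) * x) = (1 - x) * (1 - (m : ℝ) * (x / (1 - x))) := by
    field_simp
    push_cast
    ring
  rw [hfac, mul_pow]
  push_cast at hchoose ⊢
  linear_combination (-(-1:ℝ)^m * ((S:ℝ)+1) * (1-x)^S * (1 - (m:ℝ) * (x/(1-x)))^S) * hchoose

lemma phi_zero_of_pos (K T : ℕ) (hK : 1 ≤ K) : phi K T 0 = 0 := by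
  unfold phi
  have h := Int.alternating_sum_range_choose_of_ne (Nat.one_le_iff_ne_zero.mp hK)
  have h' : ((∑ i ∈ Finset.range (K + 1), (-1 : ℤ) ^ i * (Nat.choose K i) : ℤ) : ℝ) = 0 := by
    rw [h]; norm_num
  push_cast at h'
  simpa using h'

lemma continuous_phi (K T : ℕ) : Continuous fun x => phi K T x := by
  unfold phi
  fun_prop

lemma phi_nonneg : ∀ K T : ℕ, ∀ q : ℝ, 0 ≤ q → (K : ℝ) * q < 1 → 0 ≤ phi K T q := by
  intro K
  induction K with
  | zero => intro T q _ _; simp [phi]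
  | succ J ih =>
    intro T q hq0 hq1
    rcases Nat.eq_zero_or_pos T with hT | hT
    · subst hT
      have := phi_zero_of_pos (J + 1) 0 (Nat.succ_le_succ (Nat.zero_le J))
      unfold phi at this ⊢
      simp only [pow_zero] at this ⊢
      linarith [this]
    have h0 : phi (J + 1) T 0 = 0 := phi_zero_of_pos _ _ (Nat.succ_le_succ (Nat.zero_le J))
    have mono : MonotoneOn (fun x => phi (J + 1) T x) (Set.Icc 0 q) := by
      apply monotoneOn_of_deriv_nonneg (convex_Icc 0 q) (continuous_phi _ _).continuousOn
      · intro x _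
        exact (hasDerivAt_phi (J + 1) T x).differentiableAt.differentiableWithinAt
      · intro x hx
        rw [interior_Icc] at hx
        have hx0 : 0 ≤ x := le_of_lt hx.1
        have hxq : x < q := hx.2
        have hJx : ((J : ℝ) + 1) * x < 1 := by
          have hJq : ((J : ℝ) + 1) * q < 1 := by exact_mod_cast hq1
          nlinarith [Nat.cast_nonneg (α := ℝ) J]
        have hx1 : x < 1 := by nlinarith [Nat.cast_nonneg (α := ℝ) J]
        have hxne : (1 : ℝ) - x ≠ 0 := by linarith
        rw [(hasDerivAt_phi (J + 1) T x).deriv,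
          phi_deriv_eq (J + 1) T (Nat.succ_le_succ (Nat.zero_le J)) hT x hxne]
        have hr0 : 0 ≤ x / (1 - x) := div_nonneg hx0 (by linarith)
        have hr1 : (J : ℝ) * (x / (1 - x)) < 1 := by
          have he : (J:ℝ) * (x / (1 - x)) = (J:ℝ) * x / (1 - x) := by ring
          rw [he, div_lt_one (by linarith : (0:ℝ) < 1 - x)]
          nlinarith
        have hphi := ih (T - 1) (x / (1 - x)) hr0 hr1
        have hpow : (0:ℝ) ≤ ((T:ℝ) * ((J:ℝ) + 1) * (1 - x) ^ (T - 1)) :=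
          mul_nonneg (by positivity) (pow_nonneg (by linarith) _)
        push_cast
        exact mul_nonneg hpow hphi
    have hq' : q ∈ Set.Icc (0:ℝ) q := Set.right_mem_Icc.mpr hq0
    have h0' : (0:ℝ) ∈ Set.Icc (0:ℝ) q := Set.left_mem_Icc.mpr hq0
    calc (0:ℝ) = phi (J + 1) T 0 := h0.symm
    _ ≤ phi (J + 1) T q := mono h0' hq' hq0

theorem stmt6 (K T : ℕ) (hK : 1 ≤ K) (hT : 1 ≤ T) (q : ℝ)
    (hq0 : 0 ≤ q) (hq1 : q < 1 / (K : ℝ)) :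
    HasDerivAt (fun x => phi K T x)
        (T * K * (1 - q) ^ (T - 1) * phi (K - 1) (T - 1) (q / (1 - q))) q ∧
      0 ≤ T * K * (1 - q) ^ (T - 1) * phi (K - 1) (T - 1) (q / (1 - q)) := by
  have hKpos : (0:ℝ) < K := by exact_mod_cast hK
  have hKq : (K : ℝ) * q < 1 := by
    rw [lt_div_iff₀ hKpos] at hq1; linarith
  have hK1 : (1:ℝ) ≤ K := by exact_mod_cast hK
  have hq1' : q < 1 := by nlinarith
  have hqne : (1:ℝ) - q ≠ 0 := by linarith
  have hd := hasDerivAt_phi K T q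
  rw [phi_deriv_eq K T hK hT q hqne] at hd
  refine ⟨hd, ?_⟩
  have hr0 : 0 ≤ q / (1 - q) := div_nonneg hq0 (by linarith)
  have hr1 : ((K - 1 : ℕ) : ℝ) * (q / (1 - q)) < 1 := by
    have : ((K - 1 : ℕ) : ℝ) = (K : ℝ) - 1 := by
      push_cast [Nat.cast_sub hK]; ring
    have he : ((K:ℝ)-1) * (q / (1 - q)) = ((K:ℝ)-1) * q / (1 - q) := by ring
    rw [this, he, div_lt_one (by linarith : (0:ℝ) < 1 - q)]
    nlinarith
  have hphi := phi_nonneg (K - 1) (T - 1) (q / (1 - q)) hr0 hr1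
  have hpow : (0:ℝ) ≤ (T:ℝ) * (K:ℝ) * (1 - q) ^ (T - 1) :=
    mul_nonneg (by positivity) (pow_nonneg (by linarith) _)
  exact mul_nonneg hpow hphi
end

section
/- For noiseless group testing of N items with K defectives under a Bernoulli(p) test design with T tests, the COMP algorithm (which declares defective exactly those items appearing in no negative test) has success probability at least 1 − (N−K)(1 − p(1−p)^K)^T. -/
open scoped Classical

lemma sum_fn_prod {ι κ : Type*} [Fintype ι] [DecidableEq ι] [Fintype κ] (g : ι → κ → ℝ) :
    ∑ x : ι → κ, ∏ i, g i (x i) = ∏ i, ∑ j, g i j := by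
  rw [← Fintype.piFinset_univ, Finset.sum_prod_piFinset]

lemma test_sum_one {N : ℕ} (p : ℝ) :
    ∑ y : Fin N → Bool, ∏ j, (if y j then p else 1 - p) = 1 := by
  have h : ∑ y : Fin N → Bool, ∏ j, (if y j then p else 1 - p)
      = ∏ _j : Fin N, ∑ b : Bool, (if b then p else 1 - p) :=
    sum_fn_prod (g := fun (_ : Fin N) (b : Bool) => if b then p else 1 - p)
  rw [h]; simp

lemma test_sum_E {N : ℕ} (p : ℝ) (D : Finset (Fin N)) (i : Fin N) (hi : i ∉ D) :
    ∑ y : Fin N → Bool,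
      (if (y i = true ∧ ∀ j ∈ D, y j = false) then (1:ℝ) else 0) *
        ∏ j, (if y j then p else 1 - p) = p * (1 - p) ^ D.card := by
  set g : Fin N → Bool → ℝ := fun j b =>
    if j = i then (if b then p else 0)
    else if j ∈ D then (if b then 0 else 1 - p)
    else (if b then p else 1 - p) with hg
  have h1 : ∀ y : Fin N → Bool,
      (if (y i = true ∧ ∀ j ∈ D, y j = false) then (1:ℝ) else 0) *
        ∏ j, (if y j then p else 1 - p) = ∏ j, g j (y j) := by
    intro y
    by_cases hE : y i = true ∧ ∀ j ∈ D, y j = false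
    · rw [if_pos hE, one_mul]
      refine Finset.prod_congr rfl fun j _ => ?_
      simp only [hg]
      by_cases hji : j = i
      · subst hji; simp [hE.1]
      · by_cases hjD : j ∈ D
        · simp [hji, hjD, hE.2 j hjD]
        · simp [hji, hjD]
    · rw [if_neg hE, zero_mul]
      symm
      push_neg at hE
      by_cases hyi : y i = true
      · obtain ⟨j, hjD, hyj⟩ := hE hyi
        refine Finset.prod_eq_zero (Finset.mem_univ j) ?_
        have hji : j ≠ i := fun h => hi (h ▸ hjD)
        simp only [hg, if_neg hji, if_pos hjD]
        simp [hyj]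
      · refine Finset.prod_eq_zero (Finset.mem_univ i) ?_
        simp only [hg, if_pos rfl]
        simp [hyi]
  rw [Finset.sum_congr rfl fun y _ => h1 y]
  have h2 : ∑ y : Fin N → Bool, ∏ j, g j (y j) = ∏ j, ∑ b : Bool, g j b := sum_fn_prod g
  rw [h2]
  have hval : ∀ j, (∑ b : Bool, g j b) =
      if j = i then p else if j ∈ D then 1 - p else 1 := by
    intro j
    simp only [hg, Fintype.sum_bool]
    by_cases hji : j = i
    · simp [hji]
    · by_cases hjD : j ∈ D <;> simp [hji, hjD]
  rw [Finset.prod_congr rfl fun j _ => hval j]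
  rw [← Finset.prod_subset (Finset.subset_univ (insert i D))
    (fun j _ hj => by
      simp only [Finset.mem_insert, not_or] at hj
      rw [if_neg hj.1, if_neg hj.2])]
  rw [Finset.prod_insert hi, if_pos rfl]
  congr 1
  rw [Finset.prod_congr rfl (fun j hj => by
    rw [if_neg (fun (h : j = i) => hi (h ▸ hj)), if_pos hj]), Finset.prod_const]

lemma bad_sum {N T : ℕ} (p : ℝ) (D : Finset (Fin N)) (i : Fin N) (hi : i ∉ D) :
    ∑ x : Fin T → Fin N → Bool,
      (if (∀ t, ¬(x t i = true ∧ ∀ j ∈ D, x t j = false)) then (1:ℝ) else 0) *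
        ∏ t, ∏ j, (if x t j then p else 1 - p)
      = (1 - p * (1 - p) ^ D.card) ^ T := by
  have h1 : ∀ x : Fin T → Fin N → Bool,
      (if (∀ t, ¬(x t i = true ∧ ∀ j ∈ D, x t j = false)) then (1:ℝ) else 0) *
        ∏ t, ∏ j, (if x t j then p else 1 - p)
      = ∏ t, ((if ¬(x t i = true ∧ ∀ j ∈ D, x t j = false) then (1:ℝ) else 0) *
          ∏ j, (if x t j then p else 1 - p)) := by
    intro x
    rw [Finset.prod_mul_distrib]
    congr 1
    by_cases h : ∀ t, ¬(x t i = true ∧ ∀ j ∈ D, x t j = false)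
    · rw [if_pos h]
      exact (Finset.prod_eq_one fun t _ => if_pos (h t)).symm
    · rw [if_neg h]
      push_neg at h
      obtain ⟨t, ht⟩ := h
      symm
      apply Finset.prod_eq_zero (Finset.mem_univ t)
      rw [if_neg (not_not_intro ht)]
  rw [Finset.sum_congr rfl fun x _ => h1 x]
  have h3 : ∑ x : Fin T → Fin N → Bool,
      ∏ t, ((if ¬((x t) i = true ∧ ∀ j ∈ D, (x t) j = false) then (1:ℝ) else 0) *
        ∏ j, (if (x t) j then p else 1 - p))
      = ∏ _t : Fin T, ∑ y : Fin N → Bool,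
          ((if ¬(y i = true ∧ ∀ j ∈ D, y j = false) then (1:ℝ) else 0) *
            ∏ j, (if y j then p else 1 - p)) :=
    sum_fn_prod (g := fun (_ : Fin T) (y : Fin N → Bool) =>
      (if ¬(y i = true ∧ ∀ j ∈ D, y j = false) then (1:ℝ) else 0) *
        ∏ j, (if y j then p else 1 - p))
  rw [h3]
  have h4 : ∑ y : Fin N → Bool,
      ((if ¬(y i = true ∧ ∀ j ∈ D, y j = false) then (1:ℝ) else 0) *
        ∏ j, (if y j then p else 1 - p)) = 1 - p * (1 - p) ^ D.card := by
    have h2 : ∀ y : Fin N → Bool,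
        (if ¬(y i = true ∧ ∀ j ∈ D, y j = false) then (1:ℝ) else 0) *
          ∏ j, (if y j then p else 1 - p)
        = (∏ j, (if y j then p else 1 - p)) -
          (if (y i = true ∧ ∀ j ∈ D, y j = false) then (1:ℝ) else 0) *
            ∏ j, (if y j then p else 1 - p) := by
      intro y
      by_cases h : y i = true ∧ ∀ j ∈ D, y j = false
      · rw [if_neg (not_not_intro h), if_pos h]; ring
      · rw [if_pos h, if_neg h]; ring
    rw [Finset.sum_congr rfl fun y _ => h2 y, Finset.sum_sub_distrib, test_sum_one,
      test_sum_E p D i hi]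
  rw [Finset.prod_congr rfl fun _t _ => h4, Finset.prod_const, Finset.card_univ,
    Fintype.card_fin]

theorem stmt11 (N T K : ℕ) (p : ℝ) (hp0 : 0 ≤ p) (hp1 : p ≤ 1)
    (D : Finset (Fin N)) (hD : D.card = K) :
    1 - ((N : ℝ) - K) * (1 - p * (1 - p) ^ K) ^ T
      ≤ ∑ x : Fin T → Fin N → Bool,
          (if Finset.univ.filter
                (fun i => ¬ ∃ t : Fin T, x t i = true ∧ ∀ j ∈ D, x t j = false) = D
            then (1 : ℝ) else 0) *
            ∏ t : Fin T, ∏ i : Fin N, (if x t i then p else 1 - p) := by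
  have hfnn : ∀ b : Bool, 0 ≤ (if b then p else 1 - p) := by
    intro b; cases b <;> simp [hp0]; linarith
  have hw : ∀ x : Fin T → Fin N → Bool,
      0 ≤ ∏ t, ∏ i, (if x t i then p else 1 - p) :=
    fun x => Finset.prod_nonneg fun t _ => Finset.prod_nonneg fun i _ => hfnn _
  have htot : ∑ x : Fin T → Fin N → Bool, ∏ t, ∏ j, (if x t j then p else 1 - p) = 1 := by
    have h : ∑ x : Fin T → Fin N → Bool, ∏ t, ∏ j, (if (x t) j then p else 1 - p)
        = ∏ _t : Fin T, ∑ y : Fin N → Bool, ∏ j, (if y j then p else 1 - p) :=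
      sum_fn_prod (g := fun (_ : Fin T) (y : Fin N → Bool) => ∏ j, (if y j then p else 1 - p))
    rw [h, Finset.prod_congr rfl fun t _ => test_sum_one p]
    simp
  have key : ∀ x : Fin T → Fin N → Bool,
      (1 - ∑ i ∈ Dᶜ,
          (if (∀ t, ¬(x t i = true ∧ ∀ j ∈ D, x t j = false)) then (1:ℝ) else 0))
      ≤ (if Finset.univ.filter
            (fun i => ¬ ∃ t : Fin T, x t i = true ∧ ∀ j ∈ D, x t j = false) = D
          then (1 : ℝ) else 0) := by
    intro x
    by_cases hG : Finset.univ.filter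
        (fun i => ¬ ∃ t : Fin T, x t i = true ∧ ∀ j ∈ D, x t j = false) = D
    · rw [if_pos hG]
      have : (0:ℝ) ≤ ∑ i ∈ Dᶜ,
          (if (∀ t, ¬(x t i = true ∧ ∀ j ∈ D, x t j = false)) then (1:ℝ) else 0) :=
        Finset.sum_nonneg fun i _ => by positivity
      linarith
    · rw [if_neg hG]
      have hDsub : D ⊆ Finset.univ.filter
          (fun i => ¬ ∃ t : Fin T, x t i = true ∧ ∀ j ∈ D, x t j = false) := by
        intro i hiD
        simp only [Finset.mem_filter, Finset.mem_univ, true_and]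
        rintro ⟨t, h1, h2⟩
        exact absurd h1 (by simp [h2 i hiD])
      obtain ⟨i, hif, hiD⟩ := Finset.exists_of_ssubset (lt_of_le_of_ne hDsub (Ne.symm hG))
      simp only [Finset.mem_filter, Finset.mem_univ, true_and, not_exists] at hif
      have h1 : (1:ℝ) ≤ ∑ i ∈ Dᶜ,
          (if (∀ t, ¬(x t i = true ∧ ∀ j ∈ D, x t j = false)) then (1:ℝ) else 0) := by
        refine le_trans ?_ (Finset.single_le_sum (f := fun i =>
            (if (∀ t, ¬(x t i = true ∧ ∀ j ∈ D, x t j = false)) then (1:ℝ) else 0))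
          (fun i _ => by positivity) (Finset.mem_compl.mpr hiD))
        exact le_of_eq (if_pos hif).symm
      linarith
  have hKN : K ≤ N := by
    rw [← hD]
    simpa using Finset.card_le_univ D
  calc 1 - ((N : ℝ) - K) * (1 - p * (1 - p) ^ K) ^ T
      = ∑ x : Fin T → Fin N → Bool,
          (1 - ∑ i ∈ Dᶜ,
            (if (∀ t, ¬(x t i = true ∧ ∀ j ∈ D, x t j = false)) then (1:ℝ) else 0)) *
          ∏ t, ∏ j, (if x t j then p else 1 - p) := by
        simp only [sub_mul, one_mul, Finset.sum_mul]
        rw [Finset.sum_sub_distrib, htot, Finset.sum_comm]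
        rw [Finset.sum_congr (rfl : Dᶜ = Dᶜ) fun i hi =>
          (bad_sum p D i (Finset.mem_compl.mp hi)).trans (by rw [hD])]
        rw [Finset.sum_const, nsmul_eq_mul, Finset.card_compl, Fintype.card_fin, hD,
          Nat.cast_sub hKN]
        ring
    _ ≤ _ := Finset.sum_le_sum fun x _ => mul_le_mul_of_nonneg_right (key x) (hw x)
end

section
/- Let K ≥ 3, q = 1/(e(K−1)), and T = ⌈(1/q − 1)·ln K⌉. Then K(1−q)^T − (K²/2)(1−2q)^T ≥ (1/3), and consequently φ_K(q,T) ≤ 2/3. -/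
open Finset Real

private lemma pair_sum17 (g : ℕ → ℝ) (n : ℕ) :
    ∑ i ∈ Finset.range (2 * n), g i = ∑ j ∈ Finset.range n, (g (2 * j) + g (2 * j + 1)) := by
  induction n with
  | zero => simp
  | succ n ih =>
    rw [Nat.mul_succ, Finset.sum_range_succ, Finset.sum_range_succ, Finset.sum_range_succ, ← ih]
    ring_nf

set_option maxHeartbeats 1000000 in
theorem stmt17 (K : ℕ) (hK : 3 ≤ K)
    (q : ℝ) (hq : q = 1 / (Real.exp 1 * ((K : ℝ) - 1)))
    (T : ℕ) (hT : T = ⌈(1 / q - 1) * Real.log K⌉₊) :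
    (1 / 3 : ℝ) ≤ (K : ℝ) * (1 - q) ^ T - ((K : ℝ) ^ 2 / 2) * (1 - 2 * q) ^ T ∧
      (∑ ℓ ∈ Finset.range (K + 1),
          (-1 : ℝ) ^ ℓ * (Nat.choose K ℓ) * (1 - ℓ * q) ^ T) ≤ 2 / 3 := by
  have e2 : (2:ℝ) ≤ Real.exp 1 := by have := Real.add_one_le_exp 1; linarith
  have e4 : Real.exp 1 ≤ 4 := by have := Real.exp_one_lt_d9; norm_num at this; linarith
  have hK3 : (3:ℝ) ≤ (K:ℝ) := by exact_mod_cast hK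
  have hden : (4:ℝ) ≤ Real.exp 1 * ((K:ℝ) - 1) := by nlinarith
  have hden0 : (0:ℝ) < Real.exp 1 * ((K:ℝ) - 1) := by linarith
  have hq0 : 0 < q := by rw [hq]; exact one_div_pos.mpr hden0
  have hq4 : q ≤ 1/4 := by rw [hq]; exact one_div_le_one_div_of_le (by norm_num) hden
  have h1q : (0:ℝ) < 1 - q := by linarith
  have h2q : (0:ℝ) < 1 - 2*q := by linarith
  have hKle : (K:ℝ) ≤ Real.exp 1 * ((K:ℝ) - 1) := by nlinarith
  have hKq : (K:ℝ) * q ≤ 1 := by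
    rw [hq, mul_one_div]; exact div_le_one_of_le₀ hKle hden0.le
  have hinv : 1/q = Real.exp 1 * ((K:ℝ)-1) := by rw [hq, one_div_one_div]
  have hK1 : (1:ℝ) < (K:ℝ) := by linarith
  have hlogK : 0 < Real.log K := Real.log_pos hK1
  set L : ℝ := (1/q - 1) * Real.log K with hL
  have hL0 : 0 ≤ L := by
    apply mul_nonneg _ hlogK.le
    rw [hinv]; linarith
  have hTge : L ≤ (T:ℝ) := by rw [hT]; exact Nat.le_ceil L
  have hTle : (T:ℝ) ≤ L + 1 := by rw [hT]; exact (Nat.ceil_lt_add_one hL0).le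
  -- identity: (q/(1-q)) * L = log K
  have hqL : (q/(1-q)) * L = Real.log K := by
    rw [hL]; field_simp
  -- key exp bounds
  have hx3 : q / (1-q) ≤ 1/3 := by rw [div_le_iff₀ h1q]; linarith
  have hxpos : 0 ≤ q / (1-q) := div_nonneg hq0.le h1q.le
  have hB : (1-2*q)/(1-q) ≤ Real.exp (-(q/(1-q))) := by
    have h := Real.add_one_le_exp (-(q/(1-q)))
    have hid : (1-2*q)/(1-q) = -(q/(1-q)) + 1 := by field_simp; ring
    linarith [hid ▸ h]
  have hA : Real.exp (-(q/(1-q))) ≤ 1 - q := by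
    have h := Real.add_one_le_exp (q/(1-q))
    have hid : q/(1-q) + 1 = 1/(1-q) := by field_simp; ring
    rw [hid] at h
    rw [Real.exp_neg]
    calc (Real.exp (q/(1-q)))⁻¹ ≤ (1/(1-q))⁻¹ := by
          apply inv_anti₀ (by positivity) h
      _ = 1 - q := by field_simp
  have hC : 2/3 ≤ Real.exp (-(q/(1-q))) := by
    have h := Real.add_one_le_exp (-(q/(1-q)))
    linarith
  -- pow bounds
  have hpow_low : Real.exp (-(q/(1-q)) * T) ≤ (1-q)^T := by
    rw [mul_comm, Real.exp_nat_mul]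
    exact pow_le_pow_left₀ (Real.exp_pos _).le hA T
  have hpow_hi : (1-q)^T ≤ Real.exp (-q * T) := by
    rw [mul_comm, Real.exp_nat_mul]
    apply pow_le_pow_left₀ h1q.le
    have := Real.add_one_le_exp (-q); linarith
  have hpow_mid : ((1-2*q)/(1-q))^T ≤ Real.exp (-(q/(1-q)) * T) := by
    rw [mul_comm (-(q/(1-q))) (T:ℝ), Real.exp_nat_mul]
    exact pow_le_pow_left₀ (by positivity) hB T
  have hexplogK : Real.exp (-(Real.log K)) = ((K:ℝ))⁻¹ := by
    rw [Real.exp_neg, Real.exp_log (by linarith)]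
  -- lower bound: exp(-x) ≤ K (1-q)^T
  have hP1 : Real.exp (-(q/(1-q))) ≤ (K:ℝ) * (1-q)^T := by
    have harg : -(Real.log K + q/(1-q)) ≤ -(q/(1-q)) * T := by
      have h1 : (q/(1-q)) * T ≤ (q/(1-q)) * (L + 1) :=
        mul_le_mul_of_nonneg_left hTle hxpos
      have h2 : (q/(1-q)) * (L + 1) = Real.log K + q/(1-q) := by
        rw [mul_add, hqL]; ring
      linarith [h2 ▸ h1]
    have := (Real.exp_le_exp.mpr harg).trans hpow_low
    have he : Real.exp (-(Real.log K + q/(1-q))) = ((K:ℝ))⁻¹ * Real.exp (-(q/(1-q))) := by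
      rw [neg_add, Real.exp_add, hexplogK]
    rw [he] at this
    have hK0 : (0:ℝ) < (K:ℝ) := by linarith
    calc Real.exp (-(q/(1-q))) = (K:ℝ) * (((K:ℝ))⁻¹ * Real.exp (-(q/(1-q)))) := by
          field_simp
      _ ≤ (K:ℝ) * (1-q)^T := mul_le_mul_of_nonneg_left this hK0.le
  -- (1-2q)^T ≤ (1-q)^T / K
  have hhalf : (1-2*q)^T ≤ (1-q)^T * ((K:ℝ))⁻¹ := by
    have hsplit : (1-2*q)^T = ((1-2*q)/(1-q))^T * (1-q)^T := by
      rw [← mul_pow, div_mul_cancel₀ _ h1q.ne']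
    have harg : -(q/(1-q)) * T ≤ -(Real.log K) := by
      have h1 : (q/(1-q)) * L ≤ (q/(1-q)) * T := mul_le_mul_of_nonneg_left hTge hxpos
      rw [hqL] at h1; linarith
    have h2 : ((1-2*q)/(1-q))^T ≤ ((K:ℝ))⁻¹ := by
      calc ((1-2*q)/(1-q))^T ≤ Real.exp (-(q/(1-q)) * T) := hpow_mid
        _ ≤ Real.exp (-(Real.log K)) := Real.exp_le_exp.mpr harg
        _ = ((K:ℝ))⁻¹ := hexplogK
    rw [hsplit, mul_comm]
    exact mul_le_mul_of_nonneg_left h2 (by positivity)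
  have hK0 : (0:ℝ) < (K:ℝ) := by linarith
  have hP2 : ((K:ℝ)^2/2) * (1-2*q)^T ≤ ((K:ℝ)/2) * (1-q)^T := by
    calc ((K:ℝ)^2/2) * (1-2*q)^T ≤ ((K:ℝ)^2/2) * ((1-q)^T * ((K:ℝ))⁻¹) :=
          mul_le_mul_of_nonneg_left hhalf (by positivity)
      _ = ((K:ℝ)/2) * (1-q)^T := by field_simp
  have part1 : (1/3 : ℝ) ≤ (K:ℝ) * (1-q)^T - ((K:ℝ)^2/2) * (1-2*q)^T := by
    linarith
  refine ⟨part1, ?_⟩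
  -- Part 2
  have hKq' : (0:ℝ) ≤ 1 - (K:ℝ)*q := by linarith
  have hb : ∀ ℓ : ℕ, ℓ ≤ K → (0:ℝ) ≤ 1 - (ℓ:ℝ)*q := by
    intro ℓ h
    have hl : (ℓ:ℝ) ≤ (K:ℝ) := by exact_mod_cast h
    have := mul_le_mul_of_nonneg_right hl hq0.le
    linarith
  have step3 : (1-q)^T ≤ Real.exp 1 * ((K:ℝ))⁻¹ := by
    have hqid : q * L = (1-q) * Real.log K := by rw [hL]; field_simp
    have hqlog : q * Real.log K ≤ 1 := by
      have h1 : Real.log K ≤ (K:ℝ) - 1 := Real.log_le_sub_one_of_pos (by linarith)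
      have h2 : q * ((K:ℝ)-1) * Real.exp 1 = 1 := by rw [hq, mul_assoc, mul_comm ((K:ℝ)-1) (Real.exp 1), one_div_mul_cancel hden0.ne']
      nlinarith
    have harg : -q * (T:ℝ) ≤ 1 - Real.log K := by
      have h1 : q * L ≤ q * (T:ℝ) := mul_le_mul_of_nonneg_left hTge hq0.le
      rw [hqid] at h1
      nlinarith
    calc (1-q)^T ≤ Real.exp (-q * T) := hpow_hi
      _ ≤ Real.exp (1 - Real.log K) := Real.exp_le_exp.mpr harg
      _ = Real.exp 1 * ((K:ℝ))⁻¹ := by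
          rw [Real.exp_sub, Real.exp_log hK0, div_eq_mul_inv]
  have hmono : ∀ ℓ : ℕ, 3 ≤ ℓ →
      (K.choose (ℓ+1) : ℝ) * (1 - (↑(ℓ+1):ℝ)*q)^T ≤ (K.choose ℓ : ℝ) * (1 - (ℓ:ℝ)*q)^T := by
    intro ℓ hl3
    rcases Nat.lt_or_ge ℓ K with hlt | hge
    · -- main case
      have hA0 : (0:ℝ) ≤ (1 - (ℓ:ℝ)*q)^T := pow_nonneg (hb ℓ hlt.le) T
      have hB0 : (0:ℝ) ≤ (1-q)^T := pow_nonneg h1q.le T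
      have h0 : (0:ℝ) ≤ 1 - (↑(ℓ+1):ℝ)*q := hb (ℓ+1) hlt
      have hle : (1:ℝ) - (↑(ℓ+1):ℝ)*q ≤ (1-(ℓ:ℝ)*q)*(1-q) := by
        push_cast
        nlinarith [mul_nonneg (Nat.cast_nonneg ℓ : (0:ℝ) ≤ (ℓ:ℝ)) (sq_nonneg q)]
      have step2 : (1 - (↑(ℓ+1):ℝ)*q)^T ≤ (1-(ℓ:ℝ)*q)^T * (1-q)^T := by
        rw [← mul_pow]
        exact pow_le_pow_left₀ h0 hle T
      have hc4 : (4:ℕ) * K.choose (ℓ+1) ≤ K * K.choose ℓ := by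
        have h := Nat.choose_succ_right_eq K ℓ
        calc 4 * K.choose (ℓ+1) ≤ (ℓ+1) * K.choose (ℓ+1) :=
              Nat.mul_le_mul_right _ (by omega)
          _ = K.choose ℓ * (K-ℓ) := by rw [mul_comm]; exact h
          _ ≤ K.choose ℓ * K := Nat.mul_le_mul_left _ (Nat.sub_le K ℓ)
          _ = K * K.choose ℓ := Nat.mul_comm _ _
      have hCl1 : (K.choose (ℓ+1) : ℝ) ≤ (K:ℝ) * (K.choose ℓ : ℝ) / 4 := by
        have : ((4 * K.choose (ℓ+1) : ℕ) : ℝ) ≤ ((K * K.choose ℓ : ℕ) : ℝ) := by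
          exact_mod_cast hc4
        push_cast at this
        linarith
      calc (K.choose (ℓ+1) : ℝ) * (1 - (↑(ℓ+1):ℝ)*q)^T
          ≤ (K.choose (ℓ+1) : ℝ) * ((1-(ℓ:ℝ)*q)^T * (1-q)^T) :=
            mul_le_mul_of_nonneg_left step2 (Nat.cast_nonneg _)
        _ ≤ ((K:ℝ) * (K.choose ℓ : ℝ) / 4) * ((1-(ℓ:ℝ)*q)^T * (1-q)^T) :=
            mul_le_mul_of_nonneg_right hCl1 (mul_nonneg hA0 hB0)
        _ ≤ ((K:ℝ) * (K.choose ℓ : ℝ) / 4) * ((1-(ℓ:ℝ)*q)^T * (Real.exp 1 * ((K:ℝ))⁻¹)) := by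
            apply mul_le_mul_of_nonneg_left _ (by positivity)
            exact mul_le_mul_of_nonneg_left step3 hA0
        _ = (K.choose ℓ : ℝ) * (1-(ℓ:ℝ)*q)^T * (Real.exp 1 / 4) := by
            field_simp
        _ ≤ (K.choose ℓ : ℝ) * (1-(ℓ:ℝ)*q)^T * 1 := by
            apply mul_le_mul_of_nonneg_left (by linarith) (mul_nonneg (Nat.cast_nonneg _) hA0)
        _ = (K.choose ℓ : ℝ) * (1-(ℓ:ℝ)*q)^T := mul_one _
    · -- degenerate cases
      rcases Nat.lt_or_ge K ℓ with hgt | hge2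
      · have h1 : K.choose ℓ = 0 := Nat.choose_eq_zero_of_lt hgt
        have h2 : K.choose (ℓ+1) = 0 := Nat.choose_eq_zero_of_lt (by omega)
        simp [h1, h2]
      · have h2 : K.choose (ℓ+1) = 0 := Nat.choose_eq_zero_of_lt (by omega)
        rw [h2]
        simp only [Nat.cast_zero, zero_mul]
        exact mul_nonneg (Nat.cast_nonneg _) (pow_nonneg (hb ℓ hge2) T)
  -- sum manipulation
  set f : ℕ → ℝ := fun ℓ => (-1:ℝ)^ℓ * (Nat.choose K ℓ : ℝ) * (1 - (ℓ:ℝ)*q)^T with hf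
  show (∑ ℓ ∈ Finset.range (K+1), f ℓ) ≤ 2/3
  have hext : ∑ ℓ ∈ Finset.range (K+1), f ℓ = ∑ ℓ ∈ Finset.range (3+2*K), f ℓ := by
    apply Finset.sum_subset (Finset.range_subset_range.mpr (by omega))
    intro x hx hnx
    simp only [Finset.mem_range] at hx hnx
    have h0 : K.choose x = 0 := Nat.choose_eq_zero_of_lt (by omega)
    simp [hf, h0]
  have hsplit : ∑ ℓ ∈ Finset.range (3+2*K), f ℓ
      = (∑ ℓ ∈ Finset.range 3, f ℓ) + ∑ i ∈ Finset.range (2*K), f (3+i) := by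
    rw [Finset.sum_range_add]
  have htail : ∑ i ∈ Finset.range (2*K), f (3+i) ≤ 0 := by
    rw [pair_sum17]
    apply Finset.sum_nonpos
    intro j hj
    have hidx : 3 + (2*j+1) = (3+2*j) + 1 := by omega
    have hm := hmono (3+2*j) (by omega)
    have hsign1 : (-1:ℝ)^(3+2*j) = -1 := by
      rw [pow_add, pow_mul]; norm_num
    have hsign2 : (-1:ℝ)^((3+2*j)+1) = 1 := by
      rw [pow_succ, hsign1]; norm_num
    simp only [hf, hidx, hsign1, hsign2]
    push_cast at hm ⊢
    linarith
  have hfront : ∑ ℓ ∈ Finset.range 3, f ℓ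
      = 1 - (K:ℝ)*(1-q)^T + (K.choose 2 : ℝ)*(1-2*q)^T := by
    rw [Finset.sum_range_succ, Finset.sum_range_succ, Finset.sum_range_succ,
      Finset.sum_range_zero]
    simp only [hf]
    norm_num [Nat.choose_one_right]
    ring
  have hC2 : (K.choose 2 : ℝ) ≤ (K:ℝ)^2/2 := by
    have h1 : ((K*(K-1)/2 : ℕ):ℝ) ≤ ((K*(K-1) : ℕ):ℝ)/2 := Nat.cast_div_le
    rw [Nat.cast_mul, Nat.cast_sub (by omega)] at h1
    rw [Nat.choose_two_right]
    push_cast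
    nlinarith
  have h2q0 : (0:ℝ) ≤ (1-2*q)^T := pow_nonneg h2q.le T
  have hC2' : (K.choose 2 : ℝ)*(1-2*q)^T ≤ (K:ℝ)^2/2*(1-2*q)^T :=
    mul_le_mul_of_nonneg_right hC2 h2q0
  rw [hext, hsplit, hfront]
  linarith
end
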